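/- Let 𝒫 be a nonempty set of finitely additive probabilities on a measurable space (Ω,𝓕) and let v(A) = inf_{P∈𝒫} P(A) for A ∈ 𝓕 be the associated lower probability. Define core(v) = {P : P is a finitely additive probability on 𝓕 with P(A) ≥ v(A) for all A ∈ 𝓕}. Then core(v) is nonempty, and v is exact: for every A ∈ 𝓕 there exists P ∈ core(v) with P(A) = v(A), i.e. v(A) = min_{P∈core(v)} P(A). -/

import Mathlib

open MeasureTheory Filter Topology Set

def IsFinAddProb {Ω : Type*} [MeasurableSpace Ω] (P : Set Ω → ℝ) : Prop :=
  P ∅ = 0 ∧ P Set.univ = 1 ∧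
    (∀ A : Set Ω, MeasurableSet A → 0 ≤ P A ∧ P A ≤ 1) ∧
    (∀ A B : Set Ω, MeasurableSet A → MeasurableSet B → Disjoint A B →
      P (A ∪ B) = P A + P B)

def IsCapacity {Ω : Type*} [MeasurableSpace Ω] (μ : Set Ω → ℝ) : Prop :=
  μ ∅ = 0 ∧ μ Set.univ = 1 ∧
    ∀ A B : Set Ω, MeasurableSet A → MeasurableSet B → A ⊆ B → μ A ≤ μ B

def ContBelow {Ω : Type*} [MeasurableSpace Ω] (μ : Set Ω → ℝ) : Prop :=
  ∀ A : ℕ → Set Ω, (∀ n, MeasurableSet (A n)) → Monotone A →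
    Filter.Tendsto (fun n => μ (A n)) Filter.atTop (nhds (μ (⋃ n, A n)))

def ContAbove {Ω : Type*} [MeasurableSpace Ω] (μ : Set Ω → ℝ) : Prop :=
  ∀ A : ℕ → Set Ω, (∀ n, MeasurableSet (A n)) → Antitone A →
    Filter.Tendsto (fun n => μ (A n)) Filter.atTop (nhds (μ (⋂ n, A n)))

def ContAtEmpty {Ω : Type*} [MeasurableSpace Ω] (μ : Set Ω → ℝ) : Prop :=
  ∀ A : ℕ → Set Ω, (∀ n, MeasurableSet (A n)) → Antitone A → (⋂ n, A n) = ∅ →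
    Filter.Tendsto (fun n => μ (A n)) Filter.atTop (nhds 0)

def ContAtUniv {Ω : Type*} [MeasurableSpace Ω] (μ : Set Ω → ℝ) : Prop :=
  ∀ A : ℕ → Set Ω, (∀ n, MeasurableSet (A n)) → Monotone A → (⋃ n, A n) = Set.univ →
    Filter.Tendsto (fun n => μ (A n)) Filter.atTop (nhds 1)

def conjCap {Ω : Type*} (μ : Set Ω → ℝ) (A : Set Ω) : ℝ := 1 - μ Aᶜ

noncomputable def choquet {Ω : Type*} (μ : Set Ω → ℝ) (ξ : Ω → ℝ) : ℝ :=
  (∫ t in Set.Ioi (0:ℝ), μ {ω | ξ ω ≥ t}) +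
    (∫ t in Set.Iio (0:ℝ), (μ {ω | ξ ω ≥ t} - 1))

noncomputable def choquetE {Ω : Type*} (μ : Set Ω → ℝ) (ξ : Ω → EReal) : ℝ :=
  (∫ t in Set.Ioi (0:ℝ), μ {ω | (t : EReal) ≤ ξ ω}) +
    (∫ t in Set.Iio (0:ℝ), (μ {ω | (t : EReal) ≤ ξ ω} - 1))

def UpperProbOf {Ω : Type*} [MeasurableSpace Ω] (𝒮 : Set (Set Ω → ℝ)) (V : Set Ω → ℝ) : Prop :=
  ∀ A : Set Ω, MeasurableSet A → V A = sSup ((fun P => P A) '' 𝒮)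

def LowerProbOf {Ω : Type*} [MeasurableSpace Ω] (𝒮 : Set (Set Ω → ℝ)) (v : Set Ω → ℝ) : Prop :=
  ∀ A : Set Ω, MeasurableSet A → v A = sInf ((fun P => P A) '' 𝒮)

def ErgodicCap {Ω : Type*} [MeasurableSpace Ω] (μ : Set Ω → ℝ) (θ : Ω → Ω) : Prop :=
  ∀ B : Set Ω, MeasurableSet B → θ ⁻¹' B = B →
    (μ B = 0 ∨ μ B = 1) ∧ (μ B = 0 ∨ μ Bᶜ = 0)

def PreservesCap {Ω : Type*} [MeasurableSpace Ω] (μ : Set Ω → ℝ) (θ : Ω → Ω) : Prop :=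
  ∀ A : Set Ω, MeasurableSet A → μ (θ ⁻¹' A) = μ A

def IndepSigmaWrt {Ω : Type*} (μ : Set Ω → ℝ) (m₁ m₂ : MeasurableSpace Ω) : Prop :=
  ∀ A B : Set Ω, MeasurableSet[m₁] A → MeasurableSet[m₂] B → μ (A ∩ B) = μ A * μ B

theorem stmt0 {Ω : Type*} [MeasurableSpace Ω]
    (𝒮 : Set (Set Ω → ℝ)) (h𝒮 : 𝒮.Nonempty) (hP : ∀ P ∈ 𝒮, IsFinAddProb P)
    (v : Set Ω → ℝ) (hv : LowerProbOf 𝒮 v) :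
    (∃ P : Set Ω → ℝ, IsFinAddProb P ∧ ∀ A : Set Ω, MeasurableSet A → v A ≤ P A) ∧
    ∀ A : Set Ω, MeasurableSet A →
      ∃ P : Set Ω → ℝ,
        (IsFinAddProb P ∧ ∀ B : Set Ω, MeasurableSet B → v B ≤ P B) ∧ P A = v A := by
  -- v B is a lower bound for every member of 𝒮
  have hlb : ∀ B : Set Ω, MeasurableSet B → ∀ P ∈ 𝒮, v B ≤ P B := by
    intro B hB P hPm
    rw [hv B hB]
    exact csInf_le ⟨0, by rintro x ⟨Q, hQ, rfl⟩; exact ((hP Q hQ).2.2.1 B hB).1⟩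
      ⟨P, hPm, rfl⟩
  constructor
  · obtain ⟨P, hPm⟩ := h𝒮
    exact ⟨P, hP P hPm, fun A hA => hlb A hA P hPm⟩
  intro A hA
  -- choose a minimizing sequence
  have hseq : ∀ n : ℕ, ∃ P ∈ 𝒮, P A < v A + 1 / (n + 1) := by
    intro n
    have hne : ((fun P => P A) '' 𝒮).Nonempty := h𝒮.image _
    have h : sInf ((fun P => P A) '' 𝒮) < v A + 1 / (n + 1) := by
      rw [← hv A hA]
      have : (0:ℝ) < 1 / (n + 1) := by positivity
      linarith
    obtain ⟨x, ⟨P, hPm, rfl⟩, hx⟩ := exists_lt_of_csInf_lt hne h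
    exact ⟨P, hPm, hx⟩
  choose Q hQmem hQlt using hseq
  -- ultrafilter extending atTop
  set U : Ultrafilter ℕ := Ultrafilter.of Filter.atTop with hU
  have hUle : (U : Filter ℕ) ≤ Filter.atTop := Ultrafilter.of_le _
  set P : Set Ω → ℝ := fun B => limUnder (U : Filter ℕ) (fun n => Q n B) with hPdef
  -- convergence along U for measurable sets
  have hlim : ∀ B : Set Ω, MeasurableSet B →
      Filter.Tendsto (fun n => Q n B) (U : Filter ℕ) (nhds (P B)) := by
    intro B hB
    apply tendsto_nhds_limUnder
    have hbdd : ∀ n, Q n B ∈ Set.Icc (0:ℝ) 1 := fun n =>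
      ⟨((hP _ (hQmem n)).2.2.1 B hB).1, ((hP _ (hQmem n)).2.2.1 B hB).2⟩
    obtain ⟨x, _, hle⟩ := isCompact_Icc.ultrafilter_le_nhds
      (U.map (fun n => Q n B))
      (by
        rw [Ultrafilter.coe_map, Filter.le_principal_iff]
        exact Filter.mem_map.mpr (Filter.univ_mem' hbdd))
    exact ⟨x, by rwa [Ultrafilter.coe_map] at hle⟩
  have hQprob : ∀ n, IsFinAddProb (Q n) := fun n => hP _ (hQmem n)
  have hPempty : P ∅ = 0 := by
    have : Filter.Tendsto (fun n => Q n (∅ : Set Ω)) (U : Filter ℕ) (nhds 0) := by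
      have : (fun n => Q n (∅ : Set Ω)) = fun _ => (0:ℝ) := by
        funext n; exact (hQprob n).1
      rw [this]; exact tendsto_const_nhds
    exact this.limUnder_eq
  have hPuniv : P Set.univ = 1 := by
    have : Filter.Tendsto (fun n => Q n (Set.univ : Set Ω)) (U : Filter ℕ) (nhds 1) := by
      have : (fun n => Q n (Set.univ : Set Ω)) = fun _ => (1:ℝ) := by
        funext n; exact (hQprob n).2.1
      rw [this]; exact tendsto_const_nhds
    exact this.limUnder_eq
  have hPbnd : ∀ B : Set Ω, MeasurableSet B → 0 ≤ P B ∧ P B ≤ 1 := by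
    intro B hB
    constructor
    · exact ge_of_tendsto (hlim B hB)
        (Filter.Eventually.of_forall fun n => ((hQprob n).2.2.1 B hB).1)
    · exact le_of_tendsto (hlim B hB)
        (Filter.Eventually.of_forall fun n => ((hQprob n).2.2.1 B hB).2)
  have hPadd : ∀ B C : Set Ω, MeasurableSet B → MeasurableSet C → Disjoint B C →
      P (B ∪ C) = P B + P C := by
    intro B C hB hC hBC
    have h1 : Filter.Tendsto (fun n => Q n (B ∪ C)) (U : Filter ℕ) (nhds (P B + P C)) := by
      have heq : (fun n => Q n (B ∪ C)) = fun n => Q n B + Q n C := by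
        funext n; exact (hQprob n).2.2.2 B C hB hC hBC
      rw [heq]
      exact (hlim B hB).add (hlim C hC)
    exact h1.limUnder_eq
  have hPge : ∀ B : Set Ω, MeasurableSet B → v B ≤ P B := by
    intro B hB
    exact ge_of_tendsto (hlim B hB)
      (Filter.Eventually.of_forall fun n => hlb B hB _ (hQmem n))
  have hPA : P A = v A := by
    have hto : Filter.Tendsto (fun n => Q n A) Filter.atTop (nhds (v A)) := by
      have h0 : Filter.Tendsto (fun n : ℕ => v A + 1 / (n + 1)) Filter.atTop (nhds (v A)) := by
        have : Filter.Tendsto (fun n : ℕ => 1 / ((n : ℝ) + 1)) Filter.atTop (nhds 0) :=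
          tendsto_one_div_add_atTop_nhds_zero_nat
        have h := (tendsto_const_nhds (x := v A) (f := Filter.atTop (α := ℕ))).add this
        simpa using h
      exact tendsto_of_tendsto_of_tendsto_of_le_of_le tendsto_const_nhds h0
        (fun n => hlb A hA _ (hQmem n)) (fun n => (hQlt n).le)
    exact (hto.mono_left hUle).limUnder_eq
  exact ⟨P, ⟨⟨hPempty, hPuniv, hPbnd, hPadd⟩, hPge⟩, hPA⟩
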